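/- Let F = (p − p_k)·F_k in O[p], where p_k ∈ O. Suppose a 1-form on S_k = {F_k = 0} corresponds to the polynomial r_k ∈ O[p] with differential data t_{ω_k} ∈ O[p] (i.e. d ω_k = t_{ω_k}·(dx∧dy)/∂_p F_k). Then the pullback 1-form on S = {F = 0} corresponding to ω = (p − p_k)·r_k satisfies t_ω = (p − p_k)·t_{ω_k}. In particular, an abelian relation of the extracted web W_k(d−1) (t_{ω_k} = 0) gives an abelian relation of W(d) whose associated polynomial r = (p − p_k)·r_k vanishes at p_k. -/
import Mathlib


open Polynomial

/-- Coefficientwise application of a derivation `δ` of `O` to a polynomial in `O[X]`. -/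
noncomputable def cderiv {O : Type*} [CommRing O] (δ : O → O) (f : O[X]) : O[X] :=
  f.sum fun n a => C (δ a) * X ^ n


lemma cderiv_coeff {O : Type*} [CommRing O] (δ : Derivation ℤ O O) (f : O[X]) (m : ℕ) :
    (cderiv (δ ·) f).coeff m = δ (f.coeff m) := by
  rw [cderiv, Polynomial.sum_def, finset_sum_coeff]
  simp only [coeff_C_mul, coeff_X_pow, mul_ite, mul_one, mul_zero]
  rw [Finset.sum_ite_eq f.support m (fun n => δ (f.coeff n))]
  split_ifs with h
  · rfl
  · rw [notMem_support_iff.mp h, map_zero]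

lemma cderiv_mul {O : Type*} [CommRing O] (δ : Derivation ℤ O O) (f g : O[X]) :
    cderiv (δ ·) (f * g) = cderiv (δ ·) f * g + f * cderiv (δ ·) g := by
  ext m
  simp only [coeff_add, coeff_mul, cderiv_coeff, map_sum, Derivation.leibniz,
    smul_eq_mul]
  rw [← Finset.sum_add_distrib]
  congr 1; ext x; ring

/-- The Sylvester matrix of `f` (degree `n`) and `g` (degree `m`); its determinant
is the resultant of `f` and `g`. -/
noncomputable def sylvester {O : Type*} [CommRing O] (f g : O[X]) (n m : ℕ) :
    Matrix (Fin (m + n)) (Fin (m + n)) O :=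
  Matrix.of fun i j =>
    if (i : ℕ) < m then
      (if (i : ℕ) ≤ (j : ℕ) ∧ (j : ℕ) ≤ (i : ℕ) + n then f.coeff (n - ((j : ℕ) - (i : ℕ))) else 0)
    else
      (if (i : ℕ) - m ≤ (j : ℕ) ∧ (j : ℕ) ≤ (i : ℕ) - m + m then
        g.coeff (m - ((j : ℕ) - ((i : ℕ) - m))) else 0)

/-- Extracted webs and pullback of 1-forms.
Let `F = (p − p_k)·F_k`.  If the 1-form on `S_k = {F_k = 0}` given by `r_k` has
differential data `t_{ω_k}` — i.e. there is `r_{k,p}` with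
`r_k(∂_x F_k + p ∂_y F_k) + r_{k,p} ∂_p F_k = (∂_x r_k + p ∂_y r_k + ∂_p r_{k,p} − t_{ω_k})·F_k` —
then the corresponding 1-form on `S = {F = 0}`, given by `r = (p − p_k)·r_k`, has
differential data `t_ω = (p − p_k)·t_{ω_k}`.  In particular an abelian relation of the
extracted web (`t_{ω_k} = 0`) gives one of `W(d)` whose polynomial vanishes at `p_k`. -/
theorem statement11 {O : Type*} [CommRing O] (dx dy : Derivation ℤ O O)
    (d : ℕ) (hd : 3 ≤ d)
    (pk : O) (Fk F : O[X]) (hF : F = (X - C pk) * Fk)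
    (hdegk : Fk.natDegree = d - 1) (hdeg : F.natDegree = d)
    (rk rkp t : O[X]) (hrk : rk.natDegree ≤ d - 4) (hrkp : rkp.natDegree ≤ d - 2)
    (ht : t.natDegree ≤ d - 2)
    (hrel : rk * (cderiv (dx ·) Fk + X * cderiv (dy ·) Fk) + rkp * derivative Fk
      = (cderiv (dx ·) rk + X * cderiv (dy ·) rk + derivative rkp - t) * Fk) :
    (∃ rp : O[X], rp.natDegree ≤ d - 1 ∧
      ((X - C pk) * rk) * (cderiv (dx ·) F + X * cderiv (dy ·) F) + rp * derivative F
        = (cderiv (dx ·) ((X - C pk) * rk) + X * cderiv (dy ·) ((X - C pk) * rk)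
            + derivative rp - (X - C pk) * t) * F) ∧
    (t = 0 → ((X - C pk) * rk).eval pk = 0) := by
  constructor
  · refine ⟨(X - C pk) * rkp, ?_, ?_⟩
    · calc ((X - C pk) * rkp).natDegree ≤ (X - C pk).natDegree + rkp.natDegree :=
            natDegree_mul_le
        _ ≤ 1 + (d - 2) := add_le_add (natDegree_X_sub_C_le pk) hrkp
        _ ≤ d - 1 := by omega
    · subst hF
      simp only [cderiv_mul, derivative_mul, derivative_X_sub_C]
      linear_combination (X - C pk) ^ 2 * hrel
  · intro _
    simp
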